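/- arXiv:1504.04960 — 7 statements merged into one kernel-verified Lean document; each statement's English description precedes it below -/
import Mathlib

section
/- Fix a finite field F_q, positive integers m, n, c, a receiver with demand index d ∈ {1,...,m}, side information H ⊆ {1,...,m}\{d}, error parameter δ, and an mn×c matrix L over F_q. Fix an error pattern S ⊆ {1,...,c} with |S| = 2δ. Let Ĥ ⊆ {1,...,mn} be the coordinate positions belonging to the blocks indexed by H, let L_{H̄} be the submatrix of L consisting of the rows not in Ĥ, let I_S be the 2δ×c submatrix of the c×c identity matrix consisting of the rows indexed by S, and let I_{D(R)} be the (mn − n|H| + 2δ) × n matrix whose n rows corresponding to the demand block d (within the rows of L_{H̄}) form the n×n identity matrix and all of whose other entries are zero. Then the following are equivalent: (i) for every y ∈ F_q^{mn} with y zero on all coordinates of Ĥ and nonzero on the block of coordinates of d, and every ε̄ ∈ F_q^{2δ}, the row vector (y restricted to the complement of Ĥ, ε̄) multiplied by the stacked matrix [L_{H̄}; I_S] is nonzero; (ii) every column of I_{D(R)} lies in the column span of the stacked matrix [L_{H̄}; I_S]. -/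
open Matrix

/-- A vector lies in the span of the columns of a matrix iff it is orthogonal to
every vector in the left null space of the matrix. -/
lemma mem_span_cols_iff {F : Type} [Field F] {ι κ : Type} [Fintype ι] [DecidableEq ι]
    [Fintype κ] (M : Matrix ι κ F) (e : ι → F) :
    e ∈ Submodule.span F (Set.range Mᵀ) ↔
      ∀ x : ι → F, Matrix.vecMul x M = 0 → dotProduct x e = 0 := by
  constructor
  · intro he x hx
    induction he using Submodule.span_induction with
    | mem v hv =>
      obtain ⟨j, rfl⟩ := hv
      have := congrFun hx j
      simpa [Matrix.vecMul, dotProduct, Matrix.transpose] using this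
    | zero => simp
    | add v w _ _ hv hw => simp [dotProduct_add, hv, hw]
    | smul r v _ hv => simp [dotProduct_smul, hv]
  · intro h
    by_contra he
    obtain ⟨f, hfe, hmap⟩ :=
      (Submodule.span F (Set.range Mᵀ)).exists_dual_map_eq_bot_of_notMem he inferInstance
    set x : ι → F := fun i => f (Pi.single i 1) with hxdef
    have hfv : ∀ v : ι → F, f v = dotProduct x v := by
      intro v
      rw [LinearMap.pi_apply_eq_sum_univ f v, dotProduct]
      refine Finset.sum_congr rfl fun i _ => ?_
      have hsingle : (fun j => if i = j then (1 : F) else 0) = Pi.single i 1 := by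
        funext j; simp [Pi.single_apply, eq_comm]
      rw [smul_eq_mul, mul_comm, hsingle]
    have hxnull : Matrix.vecMul x M = 0 := by
      funext j
      have hcol : Mᵀ j ∈ Submodule.span F (Set.range Mᵀ) :=
        Submodule.subset_span ⟨j, rfl⟩
      have : f (Mᵀ j) = 0 := by
        have := hmap ▸ Submodule.mem_map_of_mem (f := f) hcol
        simpa using this
      rw [hfv] at this
      simpa [Matrix.vecMul, dotProduct, Matrix.transpose] using this
    have := h x hxnull
    rw [← hfv] at this
    exact hfe this

/-- Lemma 1 of the paper: equivalence between the error-correction condition (i)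
for a fixed error pattern `S` and the column-span condition (ii). Messages are
indexed by `Fin m × Fin n` (block `k` holds message `x_k`). -/
theorem stmt0 (F : Type) [Field F] [Fintype F]
    (m n c δ : ℕ) (hm : 0 < m) (hn : 0 < n) (hc : 0 < c)
    (d : Fin m) (H : Finset (Fin m)) (hdH : d ∉ H)
    (L : Matrix (Fin m × Fin n) (Fin c) F)
    (S : Finset (Fin c)) (hS : S.card = 2 * δ) :
    (∀ y : Fin m × Fin n → F,
        (∀ p : Fin m × Fin n, p.1 ∈ H → y p = 0) →
        (∃ k : Fin n, y (d, k) ≠ 0) →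
        ∀ εbar : {s : Fin c // s ∈ S} → F,
          Matrix.vecMul
            (Sum.elim (fun p : {p : Fin m × Fin n // p.1 ∉ H} => y p.1) εbar)
            (Matrix.of (Sum.elim
              (fun p : {p : Fin m × Fin n // p.1 ∉ H} => L p.1)
              (fun (s : {s : Fin c // s ∈ S}) (i : Fin c) =>
                if (s : Fin c) = i then (1 : F) else 0)))
          ≠ 0)
    ↔
    (∀ k : Fin n,
      (Sum.elim
          (fun p : {p : Fin m × Fin n // p.1 ∉ H} =>
            if p.1 = (d, k) then (1 : F) else 0)
          (fun _ : {s : Fin c // s ∈ S} => (0 : F)))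
        ∈ Submodule.span F (Set.range
            (Matrix.of (Sum.elim
              (fun p : {p : Fin m × Fin n // p.1 ∉ H} => L p.1)
              (fun (s : {s : Fin c // s ∈ S}) (i : Fin c) =>
                if (s : Fin c) = i then (1 : F) else 0)))ᵀ)) := by
  set M : Matrix ({p : Fin m × Fin n // p.1 ∉ H} ⊕ {s : Fin c // s ∈ S}) (Fin c) F :=
    Matrix.of (Sum.elim
      (fun p : {p : Fin m × Fin n // p.1 ∉ H} => L p.1)
      (fun (s : {s : Fin c // s ∈ S}) (i : Fin c) =>
        if (s : Fin c) = i then (1 : F) else 0)) with hM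
  -- the unit vectors
  set e : Fin n → ({p : Fin m × Fin n // p.1 ∉ H} ⊕ {s : Fin c // s ∈ S}) → F :=
    fun k => Sum.elim
      (fun p : {p : Fin m × Fin n // p.1 ∉ H} =>
        if p.1 = (d, k) then (1 : F) else 0)
      (fun _ : {s : Fin c // s ∈ S} => (0 : F)) with he
  have hdk : ∀ k : Fin n, ((d, k) : Fin m × Fin n).1 ∉ H := fun _ => hdH
  have hdot : ∀ (k : Fin n) (x : ({p : Fin m × Fin n // p.1 ∉ H} ⊕ {s : Fin c // s ∈ S}) → F),
      dotProduct x (e k) = x (Sum.inl ⟨(d, k), hdk k⟩) := by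
    intro k x
    rw [dotProduct, Fintype.sum_sum_type]
    simp only [he, Sum.elim_inl, Sum.elim_inr, mul_zero, Finset.sum_const_zero, add_zero,
      mul_ite, mul_one]
    rw [Finset.sum_eq_single (⟨(d, k), hdk k⟩ : {p : Fin m × Fin n // p.1 ∉ H})]
    · simp
    · intro b _ hb
      rw [if_neg]
      intro hb'
      exact hb (Subtype.ext hb')
    · intro hb
      exact absurd (Finset.mem_univ _) hb
  -- the clean reformulation of condition (i)
  have key : (∀ y : Fin m × Fin n → F,
        (∀ p : Fin m × Fin n, p.1 ∈ H → y p = 0) →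
        (∃ k : Fin n, y (d, k) ≠ 0) →
        ∀ εbar : {s : Fin c // s ∈ S} → F,
          Matrix.vecMul
            (Sum.elim (fun p : {p : Fin m × Fin n // p.1 ∉ H} => y p.1) εbar) M ≠ 0)
      ↔ (∀ x, Matrix.vecMul x M = 0 → ∀ k : Fin n, x (Sum.inl ⟨(d, k), hdk k⟩) = 0) := by
    constructor
    · intro h x hx k
      by_contra hxk
      set y : Fin m × Fin n → F := fun p =>
        if hp : p.1 ∉ H then x (Sum.inl ⟨p, hp⟩) else 0 with hy
      have hy0 : ∀ p : Fin m × Fin n, p.1 ∈ H → y p = 0 := by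
        intro p hp; simp [hy, hp]
      have hyk : ∃ k : Fin n, y (d, k) ≠ 0 := by
        refine ⟨k, ?_⟩
        simpa [hy, hdH] using hxk
      have hxeq : Sum.elim (fun p : {p : Fin m × Fin n // p.1 ∉ H} => y p.1)
          (fun s => x (Sum.inr s)) = x := by
        funext r
        cases r with
        | inl p => simp [hy, p.2]
        | inr s => simp
      have := h y hy0 hyk (fun s => x (Sum.inr s))
      rw [hxeq] at this
      exact this hx
    · intro h y hy0 hyk εbar hx
      obtain ⟨k, hk⟩ := hyk
      have := h _ hx k
      simp only [Sum.elim_inl] at this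
      exact hk this
  rw [key]
  constructor
  · intro h k
    rw [mem_span_cols_iff]
    intro x hx
    rw [hdot]
    exact h x hx k
  · intro h x hx k
    rw [← hdot k x]
    exact (mem_span_cols_iff M (e k)).mp (h k) x hx
end

section
/- Fix a finite field F_q, positive integers m, n, c, a receiver with demand index d ∈ {1,...,m}, side information H ⊆ {1,...,m}\{d}, error parameter δ, an mn×c matrix L over F_q, and an error pattern S ⊆ {1,...,c} with |S| = 2δ. With Ĥ, L_{H̄}, I_S and I_{D(R)} as follows: Ĥ ⊆ {1,...,mn} is the set of coordinate positions in the blocks indexed by H; L_{H̄} is the submatrix of L consisting of the rows not in Ĥ; I_S is the submatrix of the c×c identity matrix with rows indexed by S; I_{D(R)} is the (mn − n|H| + 2δ) × n matrix whose n rows corresponding to the demand block d form the n×n identity matrix and whose other entries are zero. If every column of I_{D(R)} lies in the column span of the stacked matrix [L_{H̄}; I_S], then for every y ∈ F_q^{mn} that is zero on all coordinates of Ĥ and nonzero on the block of coordinates of d, and every ε ∈ F_q^c with support contained in S, one has yL + ε ≠ 0. -/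
open Matrix

/-- The 'if' direction of Lemma 1: the column-span condition implies the
error-correction condition `y L + ε ≠ 0` for errors supported in `S`. -/
theorem stmt1 (F : Type) [Field F] [Fintype F]
    (m n c δ : ℕ) (hm : 0 < m) (hn : 0 < n) (hc : 0 < c)
    (d : Fin m) (H : Finset (Fin m)) (hdH : d ∉ H)
    (L : Matrix (Fin m × Fin n) (Fin c) F)
    (S : Finset (Fin c)) (hS : S.card = 2 * δ)
    (hspan : ∀ k : Fin n,
      (Sum.elim
          (fun p : {p : Fin m × Fin n // p.1 ∉ H} =>
            if p.1 = (d, k) then (1 : F) else 0)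
          (fun _ : {s : Fin c // s ∈ S} => (0 : F)))
        ∈ Submodule.span F (Set.range
            (Matrix.of (Sum.elim
              (fun p : {p : Fin m × Fin n // p.1 ∉ H} => L p.1)
              (fun (s : {s : Fin c // s ∈ S}) (i : Fin c) =>
                if (s : Fin c) = i then (1 : F) else 0)))ᵀ)) :
    ∀ y : Fin m × Fin n → F,
      (∀ p : Fin m × Fin n, p.1 ∈ H → y p = 0) →
      (∃ k : Fin n, y (d, k) ≠ 0) →
      ∀ ε : Fin c → F, (∀ i : Fin c, ε i ≠ 0 → i ∈ S) →
        Matrix.vecMul y L + ε ≠ 0 := by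
  rintro y hyH ⟨k, hyk⟩ ε hε hzero
  -- linear functional pairing with (y restricted, ε restricted)
  set R := ({p : Fin m × Fin n // p.1 ∉ H} ⊕ {s : Fin c // s ∈ S})
  let φ : (R → F) →ₗ[F] F :=
  { toFun := fun v => (∑ p : {p : Fin m × Fin n // p.1 ∉ H}, y p.1 * v (Sum.inl p))
      + ∑ s : {s : Fin c // s ∈ S}, ε s.1 * v (Sum.inr s)
    map_add' := by
      intro u v
      simp [mul_add, Finset.sum_add_distrib]
      ring
    map_smul' := by
      intro a v
      simp only [smul_eq_mul, Pi.smul_apply, RingHom.id_apply]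
      rw [mul_add, Finset.mul_sum, Finset.mul_sum]
      simp [mul_left_comm, mul_assoc] }
  have hker : Submodule.span F (Set.range
            (Matrix.of (Sum.elim
              (fun p : {p : Fin m × Fin n // p.1 ∉ H} => L p.1)
              (fun (s : {s : Fin c // s ∈ S}) (i : Fin c) =>
                if (s : Fin c) = i then (1 : F) else 0)))ᵀ) ≤ LinearMap.ker φ := by
    rw [Submodule.span_le]
    rintro _ ⟨i, rfl⟩
    simp only [SetLike.mem_coe, LinearMap.mem_ker]
    show (∑ p : {p : Fin m × Fin n // p.1 ∉ H}, y p.1 * L p.1 i)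
      + ∑ s : {s : Fin c // s ∈ S}, ε s.1 * (if (s : Fin c) = i then (1:F) else 0) = 0
    have h1 : (∑ p : {p : Fin m × Fin n // p.1 ∉ H}, y p.1 * L p.1 i)
        = ∑ p : Fin m × Fin n, y p * L p i := by
      rw [← Finset.sum_subtype (Finset.univ.filter (fun p : Fin m × Fin n => p.1 ∉ H))
        (by simp) (fun p => y p * L p i)]
      refine Finset.sum_subset (Finset.filter_subset _ _) ?_
      intro p _ hp
      simp only [Finset.mem_filter, Finset.mem_univ, true_and, not_not] at hp
      rw [hyH p hp, zero_mul]
    have h2 : (∑ s : {s : Fin c // s ∈ S}, ε s.1 * (if (s : Fin c) = i then (1:F) else 0))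
        = ε i := by
      rw [← Finset.sum_subtype S (by simp) (fun s => ε s * (if s = i then (1:F) else 0))]
      by_cases hi : i ∈ S
      · rw [Finset.sum_eq_single i]
        · simp
        · intro b _ hb; simp [hb]
        · intro h; exact absurd hi h
      · rw [Finset.sum_eq_zero, eq_comm]
        · by_contra h; exact hi (hε i h)
        · intro b hb
          have : b ≠ i := fun h => hi (h ▸ hb)
          simp [this]
    rw [h1, h2]
    have := congrFun hzero i
    simpa [Matrix.vecMul, dotProduct] using this
  have hmem := hker (hspan k)
  rw [LinearMap.mem_ker] at hmem
  apply hyk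
  rw [← hmem]
  show y (d, k) = (∑ p : {p : Fin m × Fin n // p.1 ∉ H},
      y p.1 * (if p.1 = (d, k) then (1:F) else 0)) + ∑ s : {s : Fin c // s ∈ S}, ε s.1 * 0
  have h3 : (∑ p : {p : Fin m × Fin n // p.1 ∉ H},
      y p.1 * (if p.1 = (d, k) then (1:F) else 0)) = y (d, k) := by
    rw [← Finset.sum_subtype (Finset.univ.filter (fun p : Fin m × Fin n => p.1 ∉ H))
      (by simp) (fun p => y p * (if p = (d, k) then (1:F) else 0))]
    rw [Finset.sum_eq_single (d, k)]
    · simp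
    · intro b _ hb; simp [hb]
    · intro h; simp [hdH] at h
  rw [h3]
  simp
end

section
/- Fix a finite field F_q, positive integers m, n, c, a receiver with demand index d ∈ {1,...,m}, side information H ⊆ {1,...,m}\{d}, error parameter δ, an mn×c matrix L over F_q, and an error pattern S ⊆ {1,...,c} with |S| = 2δ. With Ĥ, L_{H̄}, I_S and I_{D(R)} as follows: Ĥ ⊆ {1,...,mn} is the set of coordinate positions in the blocks indexed by H; L_{H̄} is the submatrix of L consisting of the rows not in Ĥ; I_S is the submatrix of the c×c identity matrix with rows indexed by S; I_{D(R)} is the (mn − n|H| + 2δ) × n matrix whose n rows corresponding to the demand block d form the n×n identity matrix and whose other entries are zero. If for every y ∈ F_q^{mn} that is zero on all coordinates of Ĥ and nonzero on the block of coordinates of d, and every ε ∈ F_q^c with support contained in S, one has yL + ε ≠ 0, then every column of I_{D(R)} lies in the column span of the stacked matrix [L_{H̄}; I_S]. -/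
open Matrix

/-- The 'only if' direction of Lemma 1: the error-correction condition
`y L + ε ≠ 0` for errors supported in `S` implies the column-span condition. -/
theorem stmt2 (F : Type) [Field F] [Fintype F]
    (m n c δ : ℕ) (hm : 0 < m) (hn : 0 < n) (hc : 0 < c)
    (d : Fin m) (H : Finset (Fin m)) (hdH : d ∉ H)
    (L : Matrix (Fin m × Fin n) (Fin c) F)
    (S : Finset (Fin c)) (hS : S.card = 2 * δ)
    (hec : ∀ y : Fin m × Fin n → F,
      (∀ p : Fin m × Fin n, p.1 ∈ H → y p = 0) →
      (∃ k : Fin n, y (d, k) ≠ 0) →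
      ∀ ε : Fin c → F, (∀ i : Fin c, ε i ≠ 0 → i ∈ S) →
        Matrix.vecMul y L + ε ≠ 0) :
    ∀ k : Fin n,
      (Sum.elim
          (fun p : {p : Fin m × Fin n // p.1 ∉ H} =>
            if p.1 = (d, k) then (1 : F) else 0)
          (fun _ : {s : Fin c // s ∈ S} => (0 : F)))
        ∈ Submodule.span F (Set.range
            (Matrix.of (Sum.elim
              (fun p : {p : Fin m × Fin n // p.1 ∉ H} => L p.1)
              (fun (s : {s : Fin c // s ∈ S}) (i : Fin c) =>
                if (s : Fin c) = i then (1 : F) else 0)))ᵀ) := by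
  intro k
  by_contra hmem
  set M : Matrix ({p : Fin m × Fin n // p.1 ∉ H} ⊕ {s : Fin c // s ∈ S}) (Fin c) F :=
    Matrix.of (Sum.elim
      (fun p : {p : Fin m × Fin n // p.1 ∉ H} => L p.1)
      (fun (s : {s : Fin c // s ∈ S}) (i : Fin c) =>
        if (s : Fin c) = i then (1 : F) else 0)) with hM
  set e : ({p : Fin m × Fin n // p.1 ∉ H} ⊕ {s : Fin c // s ∈ S}) → F :=
    Sum.elim
      (fun p : {p : Fin m × Fin n // p.1 ∉ H} =>
        if p.1 = (d, k) then (1 : F) else 0)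
      (fun _ : {s : Fin c // s ∈ S} => (0 : F)) with he
  obtain ⟨f, hfe, hker⟩ :=
    Submodule.exists_dual_map_eq_bot_of_notMem (p := Submodule.span F (Set.range Mᵀ))
      hmem inferInstance
  set g : ({p : Fin m × Fin n // p.1 ∉ H} ⊕ {s : Fin c // s ∈ S}) → F :=
    fun i => f (fun j => if i = j then 1 else 0) with hg
  have hf_apply : ∀ v, f v = ∑ i, v i * g i := by
    intro v
    rw [LinearMap.pi_apply_eq_sum_univ]
    simp [hg, smul_eq_mul]
  have hcol : ∀ j : Fin c, f (Mᵀ j) = 0 := by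
    intro j
    have h1 : Mᵀ j ∈ Submodule.span F (Set.range Mᵀ) :=
      Submodule.subset_span ⟨j, rfl⟩
    have h2 := Submodule.mem_map_of_mem (f := f) h1
    rw [hker] at h2
    simpa using h2
  have hdk : ((d, k) : Fin m × Fin n).1 ∉ H := hdH
  set y : Fin m × Fin n → F :=
    fun p => if h : p.1 ∈ H then 0 else g (Sum.inl ⟨p, h⟩) with hy
  set ε : Fin c → F :=
    fun j => if h : j ∈ S then g (Sum.inr ⟨j, h⟩) else 0 with hε
  have hyH : ∀ p : Fin m × Fin n, p.1 ∈ H → y p = 0 := fun p hp => dif_pos hp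
  have hεS : ∀ i : Fin c, ε i ≠ 0 → i ∈ S := by
    intro i hi
    by_contra h
    exact hi (dif_neg h)
  -- f e = g (inl ⟨(d,k), hdk⟩)
  have hfeval : f e = g (Sum.inl ⟨(d, k), hdk⟩) := by
    rw [hf_apply, Fintype.sum_sum_type]
    have h2 : ∀ s : {s : Fin c // s ∈ S}, e (Sum.inr s) * g (Sum.inr s) = 0 := by
      intro s; simp [he]
    rw [Finset.sum_congr rfl (fun s _ => h2 s), Finset.sum_const_zero, add_zero]
    rw [Finset.sum_eq_single (⟨(d, k), hdk⟩ : {p : Fin m × Fin n // p.1 ∉ H})]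
    · simp [he]
    · intro b _ hb
      have : ¬ (b.1 = (d, k)) := fun h => hb (Subtype.ext h)
      simp [he, this]
    · intro h; exact absurd (Finset.mem_univ _) h
  have hy2 : ∃ k' : Fin n, y (d, k') ≠ 0 := by
    refine ⟨k, ?_⟩
    have : y (d, k) = g (Sum.inl ⟨(d, k), hdk⟩) := dif_neg hdk
    rw [this, ← hfeval]
    exact hfe
  have hmain : Matrix.vecMul y L + ε = 0 := by
    funext j
    have hcolj := hcol j
    rw [hf_apply, Fintype.sum_sum_type] at hcolj
    have hA : Matrix.vecMul y L j = ∑ p : {p : Fin m × Fin n // p.1 ∉ H},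
        Mᵀ j (Sum.inl p) * g (Sum.inl p) := by
      rw [Matrix.vecMul, dotProduct]
      rw [← Finset.sum_filter_of_ne (p := fun p : Fin m × Fin n => p.1 ∉ H)
        (f := fun p => y p * L p j) (by
          intro x _ hx hxH
          exact hx (by show y x * L x j = 0; rw [hyH x hxH, zero_mul]))]
      rw [Finset.sum_subtype (p := fun p : Fin m × Fin n => p.1 ∉ H)
        (Finset.univ.filter (fun p : Fin m × Fin n => p.1 ∉ H))
        (by simp) (fun p => y p * L p j)]
      refine Finset.sum_congr rfl ?_
      intro p _
      have : y p.1 = g (Sum.inl p) := by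
        rw [hy]
        simp only [dif_neg p.2]
      rw [this, hM]
      simp [mul_comm]
    have hB : ε j = ∑ s : {s : Fin c // s ∈ S}, Mᵀ j (Sum.inr s) * g (Sum.inr s) := by
      by_cases hj : j ∈ S
      · rw [Finset.sum_eq_single (⟨j, hj⟩ : {s : Fin c // s ∈ S})]
        · simp [hε, dif_pos hj, hM]
        · intro b _ hb
          have : ¬ ((b : Fin c) = j) := fun h => hb (Subtype.ext h)
          simp [hM, this]
        · intro h; exact absurd (Finset.mem_univ _) h
      · rw [hε]
        simp only [dif_neg hj]
        symm
        refine Finset.sum_eq_zero ?_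
        intro s _
        have : ¬ ((s : Fin c) = j) := fun h => hj (h ▸ s.2)
        simp [hM, this]
    have : Matrix.vecMul y L j + ε j = 0 := by
      rw [hA, hB, hcolj]
    simpa using this
  exact hec y hyH hy2 ε hεS hmain
end

section
/- Fix a finite field F_q, positive integers m, n, c, a receiver with demand index d ∈ {1,...,m}, side information H ⊆ {1,...,m}\{d}, error parameter δ, an mn×c matrix L over F_q, and an error pattern S ⊆ {1,...,c} with |S| = 2δ. Let Ĥ ⊆ {1,...,mn} be the coordinate positions in the blocks indexed by H, let x̂_d be the n coordinate positions of block d, and let r̄ = {1,...,mn} \ (Ĥ ∪ x̂_d). Let L_{H̄}, L_{x̂_d}, L_{r̄} be the submatrices of L with rows indexed by the complement of Ĥ, by x̂_d, and by r̄ respectively, and let I_S be the submatrix of the c×c identity matrix with rows indexed by S. Suppose that for every y ∈ F_q^{mn} that is zero on all coordinates of Ĥ and nonzero on x̂_d, and every ε ∈ F_q^c supported in S, one has yL + ε ≠ 0. Then rank([L_{H̄}; I_S]) = n + rank([L_{r̄}; I_S]), where [A; B] denotes vertical concatenation of matrices. -/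
open Matrix

/-- The rank decomposition from the proof of Lemma 1:
`rank [L_{H̄}; I_S] = n + rank [L_{r̄}; I_S]`, where `r̄` consists of the rows
neither in the side-information blocks `Ĥ` nor in the demanded block `d`. -/
theorem stmt3 (F : Type) [Field F] [Fintype F]
    (m n c δ : ℕ) (hm : 0 < m) (hn : 0 < n) (hc : 0 < c)
    (d : Fin m) (H : Finset (Fin m)) (hdH : d ∉ H)
    (L : Matrix (Fin m × Fin n) (Fin c) F)
    (S : Finset (Fin c)) (hS : S.card = 2 * δ)
    (hec : ∀ y : Fin m × Fin n → F,
      (∀ p : Fin m × Fin n, p.1 ∈ H → y p = 0) →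
      (∃ k : Fin n, y (d, k) ≠ 0) →
      ∀ ε : Fin c → F, (∀ i : Fin c, ε i ≠ 0 → i ∈ S) →
        Matrix.vecMul y L + ε ≠ 0) :
    (Matrix.of (Sum.elim
        (fun p : {p : Fin m × Fin n // p.1 ∉ H} => L p.1)
        (fun (s : {s : Fin c // s ∈ S}) (i : Fin c) =>
          if (s : Fin c) = i then (1 : F) else 0))).rank
    = n + (Matrix.of (Sum.elim
        (fun p : {p : Fin m × Fin n // p.1 ∉ H ∧ p.1 ≠ d} => L p.1)
        (fun (s : {s : Fin c // s ∈ S}) (i : Fin c) =>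
          if (s : Fin c) = i then (1 : F) else 0))).rank := by
  classical
  set rA : {p : Fin m × Fin n // p.1 ∉ H} ⊕ {s : Fin c // s ∈ S} → (Fin c → F) :=
    Sum.elim (fun p => L p.1)
      (fun s i => if (s : Fin c) = i then (1 : F) else 0) with hrA
  set rB : {p : Fin m × Fin n // p.1 ∉ H ∧ p.1 ≠ d} ⊕ {s : Fin c // s ∈ S} → (Fin c → F) :=
    Sum.elim (fun p => L p.1)
      (fun s i => if (s : Fin c) = i then (1 : F) else 0) with hrB
  set rowd : Fin n → (Fin c → F) := fun k => L (d, k) with hrowd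
  set U : Submodule F (Fin c → F) := Submodule.span F (Set.range rowd) with hU
  set W : Submodule F (Fin c → F) := Submodule.span F (Set.range rB) with hW
  -- key lemma
  have key : ∀ a : Fin n → F, (∑ k, a k • rowd k) ∈ W → a = 0 := by
    intro a hu
    by_contra ha
    obtain ⟨k0, hk0⟩ : ∃ k0, a k0 ≠ 0 := by
      by_contra h
      push_neg at h
      exact ha (funext h)
    rw [hW, Submodule.mem_span_range_iff_exists_fun] at hu
    obtain ⟨b, hb⟩ := hu
    set y : Fin m × Fin n → F := fun p =>
      if h : p.1 ∉ H ∧ p.1 ≠ d then -b (Sum.inl ⟨p, h⟩)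
      else if p.1 = d then a p.2 else 0 with hy
    set ε : Fin c → F := fun i =>
      -∑ s : {s : Fin c // s ∈ S}, b (Sum.inr s) • (if (s : Fin c) = i then (1 : F) else 0)
      with hε
    have hyH : ∀ p : Fin m × Fin n, p.1 ∈ H → y p = 0 := by
      intro p hp
      have h1 : ¬ (p.1 ∉ H ∧ p.1 ≠ d) := by simp [hp]
      have h2 : p.1 ≠ d := by rintro rfl; exact hdH hp
      simp only [hy]
      rw [dif_neg h1, if_neg h2]
    have hyd : ∃ k, y (d, k) ≠ 0 := by
      refine ⟨k0, ?_⟩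
      have h1 : ¬ (((d, k0) : Fin m × Fin n).1 ∉ H ∧ ((d, k0) : Fin m × Fin n).1 ≠ d) := by
        simp
      simp only [hy]
      rw [dif_neg h1]
      simpa using hk0
    have hεS : ∀ i : Fin c, ε i ≠ 0 → i ∈ S := by
      intro i hi
      by_contra hiS
      apply hi
      simp only [hε, neg_eq_zero]
      apply Finset.sum_eq_zero
      intro s _
      have hsi : (s : Fin c) ≠ i := by rintro rfl; exact hiS s.2
      simp [hsi]
    -- compute vecMul y L
    have hvm : Matrix.vecMul y L = ∑ p : Fin m × Fin n, y p • L p := by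
      funext j
      simp [Matrix.vecMul, dotProduct, Finset.sum_apply]
    set P : Fin c → F := ∑ q : {p : Fin m × Fin n // p.1 ∉ H ∧ p.1 ≠ d},
      b (Sum.inl q) • rB (Sum.inl q) with hP
    set Q : Fin c → F := ∑ s : {s : Fin c // s ∈ S},
      b (Sum.inr s) • rB (Sum.inr s) with hQ
    have hPQ : P + Q = ∑ k, a k • rowd k := by
      rw [← hb, Fintype.sum_sum_type]
    have hsplit : (∑ p : Fin m × Fin n, y p • L p) = -P + ∑ k, a k • rowd k := by
      rw [← Finset.sum_filter_add_sum_filter_not Finset.univ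
        (fun p : Fin m × Fin n => p.1 ∉ H ∧ p.1 ≠ d)]
      congr 1
      · rw [Finset.sum_subtype (p := fun p : Fin m × Fin n => p.1 ∉ H ∧ p.1 ≠ d)
          (Finset.univ.filter (fun p : Fin m × Fin n => p.1 ∉ H ∧ p.1 ≠ d))
          (by intro x; simp) (fun p => y p • L p)]
        rw [hP, ← Finset.sum_neg_distrib]
        apply Finset.sum_congr rfl
        intro q _
        have : y q.val = -b (Sum.inl q) := by
          simp only [hy]
          rw [dif_pos q.2]
        rw [this]
        simp [hrB]
      · have h1 : ∀ p ∈ Finset.univ.filter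
            (fun p : Fin m × Fin n => ¬(p.1 ∉ H ∧ p.1 ≠ d)),
            y p • L p = if p.1 = d then a p.2 • L p else 0 := by
          intro p hp
          simp only [Finset.mem_filter] at hp
          simp only [hy, dif_neg hp.2]
          by_cases h : p.1 = d
          · simp [h]
          · simp [h]
        rw [Finset.sum_congr rfl h1]
        have h2 : ∀ p ∈ Finset.univ.filter
            (fun p : Fin m × Fin n => p.1 ∉ H ∧ p.1 ≠ d),
            (if p.1 = d then a p.2 • L p else (0 : Fin c → F)) = 0 := by
          intro p hp
          simp only [Finset.mem_filter] at hp
          simp [hp.2.2]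
        have h3 : (∑ p : Fin m × Fin n, if p.1 = d then a p.2 • L p else 0)
            = ∑ p ∈ Finset.univ.filter (fun p : Fin m × Fin n => ¬(p.1 ∉ H ∧ p.1 ≠ d)),
              (if p.1 = d then a p.2 • L p else 0) := by
          rw [← Finset.sum_filter_add_sum_filter_not Finset.univ
            (fun p : Fin m × Fin n => p.1 ∉ H ∧ p.1 ≠ d)
            (fun p => if p.1 = d then a p.2 • L p else 0)]
          rw [Finset.sum_congr rfl h2]
          simp
        rw [← h3, Fintype.sum_prod_type]
        rw [Finset.sum_comm]
        apply Finset.sum_congr rfl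
        intro k _
        rw [Finset.sum_ite_eq' Finset.univ d (fun i => a k • L (i, k))]
        simp [hrowd]
    have hεQ : ε = -Q := by
      funext i
      simp [hε, hQ, Finset.sum_apply, hrB]
    have hzero : Matrix.vecMul y L + ε = 0 := by
      rw [hvm, hsplit, hεQ, ← hPQ]
      abel
    exact hec y hyH hyd ε hεS hzero
  -- linear independence of rowd
  have hli : LinearIndependent F rowd := by
    rw [Fintype.linearIndependent_iff]
    intro g hg k
    have : g = 0 := key g (by rw [hg]; exact W.zero_mem)
    rw [this]; rfl
  -- disjointness
  have hdisj : Disjoint U W := by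
    rw [Submodule.disjoint_def]
    intro x hxU hxW
    rw [hU, Submodule.mem_span_range_iff_exists_fun] at hxU
    obtain ⟨a, ha⟩ := hxU
    have : a = 0 := key a (by rw [ha]; exact hxW)
    rw [← ha, this]
    simp
  -- range decomposition
  have hrange : Set.range rA = Set.range rowd ∪ Set.range rB := by
    ext v
    constructor
    · rintro ⟨j, rfl⟩
      cases j with
      | inl p =>
        by_cases h : p.1.1 = d
        · left
          exact ⟨p.1.2, by simp [hrA, hrowd, ← h]⟩
        · right
          exact ⟨Sum.inl ⟨p.1, ⟨p.2, h⟩⟩, rfl⟩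
      | inr s => exact Or.inr ⟨Sum.inr s, rfl⟩
    · rintro (⟨k, rfl⟩ | ⟨j, rfl⟩)
      · by_cases h : (d : Fin m) ∉ H
        · exact ⟨Sum.inl ⟨(d, k), h⟩, rfl⟩
        · exact absurd hdH (by simpa using h)
      · cases j with
        | inl p => exact ⟨Sum.inl ⟨p.1, p.2.1⟩, rfl⟩
        | inr s => exact ⟨Sum.inr s, rfl⟩
  have hspanA : Submodule.span F (Set.range rA) = U ⊔ W := by
    rw [hrange, Submodule.span_union]
  -- rank computations
  have hrkA : (Matrix.of rA).rank
      = Module.finrank F (Submodule.span F (Set.range rA)) :=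
    Matrix.rank_eq_finrank_span_row _
  have hrkB : (Matrix.of rB).rank
      = Module.finrank F (Submodule.span F (Set.range rB)) :=
    Matrix.rank_eq_finrank_span_row _
  have hfinU : Module.finrank F U = n := by
    rw [hU, finrank_span_eq_card hli]
    simp
  have hsum : Module.finrank F (U ⊔ W : Submodule F (Fin c → F))
      = Module.finrank F U + Module.finrank F W := by
    rw [← Submodule.finrank_sup_add_finrank_inf_eq U W, hdisj.eq_bot]
    simp
  rw [hrkA, hrkB, hspanA, hsum, hfinU]
end

section
/- Let I(X,R) be an index coding problem over a finite field F_q with m messages of dimension n and receivers R_1,...,R_t, where R_i demands message x_{f(i)} and has side information H_i, and let δ_1,...,δ_t be nonnegative integers. An mn×c matrix L over F_q is a differential error correcting index code for I(X,R) (i.e., for each receiver R_i there exists a decoding function ψ_i with ψ_i(yL+ε, (x_k)_{k∈H_i}) = x_{f(i)} for all y ∈ F_q^{mn} and all ε ∈ F_q^c with wt(ε) ≤ δ_i) if and only if for every receiver R_i and every y ∈ F_q^{mn} with y zero on all coordinates of Ĥ_i and nonzero on the block of coordinates of f(i), one has yL + ε ≠ 0 for all ε ∈ F_q^c with wt(ε)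 ≤ 2δ_i. -/
open Matrix

lemma hammingNorm_sub_le' {ι F : Type*} [Fintype ι] [DecidableEq F] [AddGroup F]
    (a b : ι → F) : hammingNorm (a - b) ≤ hammingNorm a + hammingNorm b := by
  have e : hammingNorm (a - b) = hammingDist a b := by
    simp_rw [hammingNorm, hammingDist, Pi.sub_apply, ne_eq, sub_eq_zero]
  rw [e, ← hammingDist_zero_right a, ← hammingDist_zero_left]
  exact hammingDist_triangle a 0 b

/-- Characterization of differential error correcting index codes (Section II):
decoding functions correcting `δ i` errors exist at each receiver iff
`y L + ε ≠ 0` for every `y` vanishing on the side information of the receiver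
and nonzero on its demanded block, and every `ε` of weight at most `2 δ i`. -/
theorem stmt4 (F : Type) [Field F] [Fintype F] [DecidableEq F]
    (m n c t : ℕ) (hm : 0 < m) (hn : 0 < n) (hc : 0 < c)
    (f : Fin t → Fin m) (Hs : Fin t → Finset (Fin m)) (hf : ∀ i, f i ∉ Hs i)
    (δ : Fin t → ℕ)
    (L : Matrix (Fin m × Fin n) (Fin c) F) :
    (∀ i : Fin t,
      ∃ ψ : (Fin c → F) → ({k : Fin m // k ∈ Hs i} → Fin n → F) → (Fin n → F),
        ∀ x : Fin m → Fin n → F, ∀ ε : Fin c → F, hammingNorm ε ≤ δ i →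
          ψ (Matrix.vecMul (fun p : Fin m × Fin n => x p.1 p.2) L + ε)
            (fun k : {k : Fin m // k ∈ Hs i} => x k.1) = x (f i))
    ↔
    (∀ i : Fin t, ∀ y : Fin m × Fin n → F,
      (∀ p : Fin m × Fin n, p.1 ∈ Hs i → y p = 0) →
      (∃ k : Fin n, y (f i, k) ≠ 0) →
      ∀ ε : Fin c → F, hammingNorm ε ≤ 2 * δ i →
        Matrix.vecMul y L + ε ≠ 0) := by
  constructor
  · -- decoders exist → no confusable vector
    intro h i y hside ⟨k, hk⟩ ε hε heq
    obtain ⟨ψ, hψ⟩ := h i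
    -- split ε into two halves of weight ≤ δ i
    set S : Finset (Fin c) := {j | ε j ≠ 0} with hS
    have hScard : S.card = hammingNorm ε := rfl
    obtain ⟨T, hTS, hTcard⟩ := Finset.exists_subset_card_eq
      (min_le_right (δ i) S.card)
    set ε₁ : Fin c → F := fun j => if j ∈ T then ε j else 0 with hε₁
    set ε₂ : Fin c → F := ε - ε₁ with hε₂
    have hw1 : hammingNorm ε₁ ≤ δ i := by
      have hsub : ({j | ε₁ j ≠ 0} : Finset (Fin c)) ⊆ T := by
        intro j hj
        simp only [Finset.mem_filter, Finset.mem_univ, true_and] at hj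
        by_contra hjT
        exact hj (by simp [hε₁, hjT])
      calc hammingNorm ε₁ ≤ T.card := Finset.card_le_card hsub
        _ ≤ δ i := hTcard ▸ min_le_left _ _
    have hw2 : hammingNorm ε₂ ≤ δ i := by
      have hsub : ({j | ε₂ j ≠ 0} : Finset (Fin c)) ⊆ S \ T := by
        intro j hj
        simp only [Finset.mem_filter, Finset.mem_univ, true_and] at hj
        rw [Finset.mem_sdiff]
        constructor
        · simp only [hS, Finset.mem_filter, Finset.mem_univ, true_and]
          intro h0
          apply hj
          simp [hε₂, hε₁, h0]
        · intro hjT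
          apply hj
          simp [hε₂, hε₁, if_pos hjT]
      calc hammingNorm ε₂ ≤ (S \ T).card := Finset.card_le_card hsub
        _ = S.card - T.card := Finset.card_sdiff_of_subset hTS
        _ ≤ δ i := by
            rw [hTcard, hScard]
            omega
    -- ψ applied to the two scenarios
    have hy : (fun p : Fin m × Fin n => y (p.1, p.2)) = y := by
      funext p; rfl
    have h1 := hψ (fun a b => y (a, b)) ε₂ hw2
    have hneg : hammingNorm (-ε₁) = hammingNorm ε₁ := by
      simp [hammingNorm, Pi.neg_apply, neg_eq_zero]
    have h2 := hψ 0 (-ε₁) (hneg ▸ hw1)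
    simp only [hy] at h1
    have hrec : Matrix.vecMul y L + ε₂ =
        Matrix.vecMul (fun p : Fin m × Fin n => (0 : Fin m → Fin n → F) p.1 p.2) L + -ε₁ := by
      have : Matrix.vecMul y L = -ε := by
        have := heq
        linear_combination (norm := module) this
      rw [this]
      have h0 : (fun p : Fin m × Fin n => (0 : Fin m → Fin n → F) p.1 p.2)
          = (0 : Fin m × Fin n → F) := rfl
      rw [h0, Matrix.zero_vecMul]
      funext j
      simp [hε₂, hε₁]
      ring
    have hsi : (fun k : {k : Fin m // k ∈ Hs i} => (fun a b => y (a, b)) k.1)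
        = (fun k : {k : Fin m // k ∈ Hs i} => (0 : Fin m → Fin n → F) k.1) := by
      funext kk b
      exact hside (kk.1, b) kk.2
    rw [hrec, hsi, h2] at h1
    exact hk (congrFun h1 k).symm
  · -- no confusable vector → decoders exist
    intro h i
    classical
    refine ⟨fun r s =>
      if hex : ∃ x : Fin m → Fin n → F,
          (∀ k : {k : Fin m // k ∈ Hs i}, x k.1 = s k) ∧
          ∃ ε : Fin c → F, hammingNorm ε ≤ δ i ∧
            Matrix.vecMul (fun p : Fin m × Fin n => x p.1 p.2) L + ε = r
      then (Classical.choose hex) (f i) else 0, ?_⟩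
    intro x ε hε
    set r := Matrix.vecMul (fun p : Fin m × Fin n => x p.1 p.2) L + ε with hr
    have hex : ∃ x' : Fin m → Fin n → F,
        (∀ k : {k : Fin m // k ∈ Hs i}, x' k.1 = x k.1) ∧
        ∃ ε' : Fin c → F, hammingNorm ε' ≤ δ i ∧
          Matrix.vecMul (fun p : Fin m × Fin n => x' p.1 p.2) L + ε' = r :=
      ⟨x, fun _ => rfl, ε, hε, rfl⟩
    beta_reduce
    rw [dif_pos hex]
    obtain ⟨hside', ε', hε', heq'⟩ := Classical.choose_spec hex
    set x' := Classical.choose hex with hx'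
    -- uniqueness: x' (f i) = x (f i)
    set y : Fin m × Fin n → F := fun p => x' p.1 p.2 - x p.1 p.2 with hy
    have hyside : ∀ p : Fin m × Fin n, p.1 ∈ Hs i → y p = 0 := by
      intro p hp
      have := congrFun (hside' ⟨p.1, hp⟩) p.2
      simp [hy, this]
    have hyeq : Matrix.vecMul y L + (ε' - ε) = 0 := by
      have : y = (fun p : Fin m × Fin n => x' p.1 p.2) - (fun p => x p.1 p.2) := rfl
      rw [this, Matrix.sub_vecMul]
      have h1 : Matrix.vecMul (fun p : Fin m × Fin n => x' p.1 p.2) L = r - ε' := by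
        linear_combination (norm := module) heq'
      have h2 : Matrix.vecMul (fun p : Fin m × Fin n => x p.1 p.2) L = r - ε := by
        linear_combination (norm := module) hr.symm
      rw [h1, h2]
      module
    have hwt : hammingNorm (ε' - ε) ≤ 2 * δ i := by
      calc hammingNorm (ε' - ε) ≤ hammingNorm ε' + hammingNorm ε := hammingNorm_sub_le' _ _
        _ ≤ 2 * δ i := by omega
    have hnone : ¬ ∃ k : Fin n, y (f i, k) ≠ 0 := by
      intro hk
      exact h i y hyside hk (ε' - ε) hwt hyeq
    push_neg at hnone
    funext b
    have := hnone b
    simp only [hy, sub_eq_zero] at this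
    exact this
end

section
/- Let I(X,R) be an index coding problem over a finite field F_q with m messages of dimension n and receivers R_1,...,R_t (receiver R_i demanding x_{f(i)} with side information H_i), let δ_1,...,δ_t be nonnegative integers, and let c be a positive integer. If there exists a vector linear differential error correcting index code L over F_q of length c and dimension n for I(X,R) in which receiver R_i corrects any δ_i errors, then there exists a discrete polymatroid representable over F_q on ground set {1,...,m+2c} whose rank function r satisfies r({1,...,m+2c}) = mn+c together with: (A) r({i}) = n for all i ∈ {1,...,m}, r({1,...,m+c}) = mn+c, and r({m+i}) = 1 for all i ∈ {1,...,2c}; (B) for every i ∈ {1,...,c}, r({1,...,m} ∪ {m+i, m+c+i}) = r({1,...,m} ∪ {m+i}) = r({1,...,m} ∪ {m+c+i}); (C) for every receiver R_i and every F ⊆ {1,...,c} with |F| = 2δ_i, setting T = H_i ∪ {m+j : j ∈ {1,...,c} \ F} and S = {m+c+1,...,m+2c}, r({f(i)} ∪ S ∪ T) = r(S ∪ T). -/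
open Matrix

namespace Stmt6Aux

open Submodule

theorem sum_submodule_eq_sup {α R M : Type*} [Semiring R] [AddCommMonoid M] [Module R M]
    (V : α → Submodule R M) (X : Finset α) : ∑ i ∈ X, V i = X.sup V := by
  classical
  induction X using Finset.induction_on with
  | empty => simp
  | insert a s h ih => rw [Finset.sum_insert h, Finset.sup_insert, ih, Submodule.add_eq_sup]

variable (F : Type) [Field F] {m n c : ℕ}

/-- index type -/
abbrev Idx (m n c : ℕ) : Type := (Fin m × Fin n) ⊕ Fin c

/-- standard basis vectors -/
noncomputable def E (ι : Idx m n c ≃ Fin (m * n + c)) (a : Idx m n c) : Fin (m * n + c) → F :=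
  Pi.single (ι a) 1

/-- embedding of the message space into the big space -/
noncomputable def lift (ι : Idx m n c ≃ Fin (m * n + c)) :
    ((Fin m × Fin n) → F) →ₗ[F] (Fin (m * n + c) → F) where
  toFun u := ∑ p, u p • E F ι (Sum.inl p)
  map_add' u v := by simp [add_smul, Finset.sum_add_distrib]
  map_smul' a u := by simp [Finset.smul_sum, smul_smul]

/-- the vectors for the second copy -/
noncomputable def wvec (ι : Idx m n c ≃ Fin (m * n + c))
    (L : Matrix (Fin m × Fin n) (Fin c) F) (j : Fin c) : Fin (m * n + c) → F :=
  lift F ι (fun p => L p j) + E F ι (Sum.inr j)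

/-- the subspace assignment -/
noncomputable def Vv (ι : Idx m n c ≃ Fin (m * n + c))
    (L : Matrix (Fin m × Fin n) (Fin c) F) (i : Fin (m + 2 * c)) :
    Submodule F (Fin (m * n + c) → F) :=
  if h : i.1 < m then
    Submodule.span F (Set.range fun s : Fin n => E F ι (Sum.inl (⟨i.1, h⟩, s)))
  else if h2 : i.1 < m + c then
    Submodule.span F {E F ι (Sum.inr ⟨i.1 - m, by omega⟩)}
  else
    Submodule.span F {wvec F ι L ⟨i.1 - (m + c), by have := i.isLt; omega⟩}

variable {F}
variable (ι : Idx m n c ≃ Fin (m * n + c)) (L : Matrix (Fin m × Fin n) (Fin c) F)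

theorem E_li : LinearIndependent F (E F ι) := by
  have h := (Pi.basisFun F (Fin (m * n + c))).linearIndependent.comp ι ι.injective
  have e : (⇑(Pi.basisFun F (Fin (m * n + c))) ∘ ι) = E F ι := by
    funext a; simp [E, Function.comp]
  rwa [e] at h

theorem E_ne_zero (a : Idx m n c) : E F ι a ≠ 0 := by
  intro h
  have := congrFun h (ι a)
  simp [E] at this

theorem lift_single (p : Fin m × Fin n) : lift F ι (Pi.single p (1 : F)) = E F ι (Sum.inl p) := by
  simp only [lift, LinearMap.coe_mk, AddHom.coe_mk]
  rw [Finset.sum_eq_single p]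
  · simp
  · intro q _ hq; rw [Pi.single_eq_of_ne hq, zero_smul]
  · intro h; simp at h

theorem lift_apply_inr (u : (Fin m × Fin n) → F) (j : Fin c) :
    lift F ι u (ι (Sum.inr j)) = 0 := by
  simp only [lift, LinearMap.coe_mk, AddHom.coe_mk, Finset.sum_apply, Pi.smul_apply, E]
  refine Finset.sum_eq_zero fun p _ => ?_
  rw [Pi.single_eq_of_ne (fun h => by simpa using ι.injective h), smul_zero]

theorem wvec_ne_zero (j : Fin c) : wvec F ι L j ≠ 0 := by
  intro h
  have h2 := congrFun h (ι (Sum.inr j))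
  simp only [wvec, Pi.add_apply, lift_apply_inr, zero_add, E, Pi.zero_apply] at h2
  rw [Pi.single_eq_same] at h2
  exact one_ne_zero h2

theorem Vv_lo {i : Fin (m + 2 * c)} (h : i.1 < m) :
    Vv F ι L i = Submodule.span F (Set.range fun s : Fin n => E F ι (Sum.inl (⟨i.1, h⟩, s))) :=
  dif_pos h

theorem Vv_mid {i : Fin (m + 2 * c)} {j : Fin c} (h : i.1 = m + j.1) :
    Vv F ι L i = Submodule.span F {E F ι (Sum.inr j)} := by
  have h1 : ¬ i.1 < m := by omega
  have h2 : i.1 < m + c := by have := j.isLt; omega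
  rw [Vv, dif_neg h1, dif_pos h2]
  suffices h3 : ∀ j' : Fin c, j' = j →
      Submodule.span F {E F ι (Sum.inr j')} = Submodule.span F {E F ι (Sum.inr j)} from
    h3 _ (Fin.ext (show i.1 - m = j.1 by omega))
  intro j' hj'; rw [hj']

theorem Vv_hi {i : Fin (m + 2 * c)} {j : Fin c} (h : i.1 = m + c + j.1) :
    Vv F ι L i = Submodule.span F {wvec F ι L j} := by
  have h1 : ¬ i.1 < m := by omega
  have h2 : ¬ i.1 < m + c := by omega
  rw [Vv, dif_neg h1, dif_neg h2]
  suffices h3 : ∀ j' : Fin c, j' = j →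
      Submodule.span F {wvec F ι L j'} = Submodule.span F {wvec F ι L j} from
    h3 _ (Fin.ext (show i.1 - (m + c) = j.1 by omega))
  intro j' hj'; rw [hj']

end Stmt6Aux
set_option maxHeartbeats 1000000 in
open Stmt6Aux Submodule in
/-- The 'only if' direction of Theorem 1: existence of a vector linear
differential error correcting index code implies existence of a representable
discrete polymatroid satisfying conditions (A), (B) and (C). -/
theorem stmt6 (F : Type) [Field F] [Fintype F] [DecidableEq F]
    (m n c t : ℕ) (hm : 0 < m) (hn : 0 < n) (hc : 0 < c)
    (f : Fin t → Fin m) (Hs : Fin t → Finset (Fin m)) (hf : ∀ i, f i ∉ Hs i)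
    (δ : Fin t → ℕ) :
    (∃ L : Matrix (Fin m × Fin n) (Fin c) F, ∀ i : Fin t,
      ∃ ψ : (Fin c → F) → ({k : Fin m // k ∈ Hs i} → Fin n → F) → (Fin n → F),
        ∀ x : Fin m → Fin n → F, ∀ ε : Fin c → F, hammingNorm ε ≤ δ i →
          ψ (Matrix.vecMul (fun p : Fin m × Fin n => x p.1 p.2) L + ε)
            (fun k : {k : Fin m // k ∈ Hs i} => x k.1) = x (f i))
    →
    (∃ r : Finset (Fin (m + 2 * c)) → ℕ,
      -- discrete polymatroid rank axioms
      r ∅ = 0 ∧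
      (∀ A B : Finset (Fin (m + 2 * c)), A ⊆ B → r A ≤ r B) ∧
      (∀ A B : Finset (Fin (m + 2 * c)), r (A ∪ B) + r (A ∩ B) ≤ r A + r B) ∧
      -- representable over F
      (∃ (N : ℕ) (V : Fin (m + 2 * c) → Submodule F (Fin N → F)),
        ∀ X : Finset (Fin (m + 2 * c)),
          Module.finrank F ↥(∑ i ∈ X, V i) = r X) ∧
      -- rank of the discrete polymatroid
      r Finset.univ = m * n + c ∧
      -- condition (A)
      (∀ i : Fin m, r {(⟨i.1, by omega⟩ : Fin (m + 2 * c))} = n) ∧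
      r (Finset.univ.filter (fun x : Fin (m + 2 * c) => x.1 < m + c)) = m * n + c ∧
      (∀ i : Fin (2 * c), r {(⟨m + i.1, by omega⟩ : Fin (m + 2 * c))} = 1) ∧
      -- condition (B)
      (∀ i : Fin c,
        r ((Finset.univ.filter (fun x : Fin (m + 2 * c) => x.1 < m)) ∪
            {(⟨m + i.1, by omega⟩ : Fin (m + 2 * c)),
             (⟨m + c + i.1, by omega⟩ : Fin (m + 2 * c))})
          = r ((Finset.univ.filter (fun x : Fin (m + 2 * c) => x.1 < m)) ∪
              {(⟨m + i.1, by omega⟩ : Fin (m + 2 * c))}) ∧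
        r ((Finset.univ.filter (fun x : Fin (m + 2 * c) => x.1 < m)) ∪
            {(⟨m + i.1, by omega⟩ : Fin (m + 2 * c))})
          = r ((Finset.univ.filter (fun x : Fin (m + 2 * c) => x.1 < m)) ∪
              {(⟨m + c + i.1, by omega⟩ : Fin (m + 2 * c))})) ∧
      -- condition (C)
      (∀ i : Fin t, ∀ Fp : Finset (Fin c), Fp.card = 2 * δ i →
        r (insert (⟨(f i).1, by omega⟩ : Fin (m + 2 * c))
            ((Finset.univ.filter (fun x : Fin (m + 2 * c) => m + c ≤ x.1)) ∪
              ((Hs i).image (fun k : Fin m => (⟨k.1, by omega⟩ : Fin (m + 2 * c))) ∪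
                Fpᶜ.image (fun j : Fin c => (⟨m + j.1, by omega⟩ : Fin (m + 2 * c))))))
          = r ((Finset.univ.filter (fun x : Fin (m + 2 * c) => m + c ≤ x.1)) ∪
              ((Hs i).image (fun k : Fin m => (⟨k.1, by omega⟩ : Fin (m + 2 * c))) ∪
                Fpᶜ.image (fun j : Fin c => (⟨m + j.1, by omega⟩ : Fin (m + 2 * c))))))) := by
  rintro ⟨L, hL⟩
  classical
  have cardI : Fintype.card (Idx m n c) = m * n + c := by simp [Idx]
  let ι : Idx m n c ≃ Fin (m * n + c) := Fintype.equivFinOfCardEq cardI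
  -- basic membership facts
  have hVlo : ∀ p : Fin m × Fin n,
      E F ι (Sum.inl p) ∈ Vv F ι L ⟨p.1.1, by have := p.1.isLt; omega⟩ := by
    intro p
    rw [Vv_lo ι L (show ((⟨p.1.1, by have := p.1.isLt; omega⟩ : Fin (m + 2 * c))).1 < m
      from p.1.isLt)]
    exact Submodule.subset_span ⟨p.2, rfl⟩
  have hVmid : ∀ j : Fin c,
      E F ι (Sum.inr j) ∈ Vv F ι L ⟨m + j.1, by have := j.isLt; omega⟩ := fun j => by
    rw [Vv_mid ι L (j := j) rfl]
    exact Submodule.mem_span_singleton_self _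
  have hVhi : ∀ j : Fin c,
      wvec F ι L j ∈ Vv F ι L ⟨m + c + j.1, by have := j.isLt; omega⟩ := fun j => by
    rw [Vv_hi ι L (j := j) rfl]
    exact Submodule.mem_span_singleton_self _
  have hmemsum : ∀ (X : Finset (Fin (m + 2 * c))) (a : Fin (m + 2 * c)), a ∈ X →
      Vv F ι L a ≤ ∑ x ∈ X, Vv F ι L x := fun X a ha => by
    rw [sum_submodule_eq_sup]; exact Finset.le_sup ha
  have hlift : ∀ (X : Finset (Fin (m + 2 * c))),
      (∀ k : Fin m, (⟨k.1, by have := k.isLt; omega⟩ : Fin (m + 2 * c)) ∈ X) →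
      ∀ u : (Fin m × Fin n) → F, lift F ι u ∈ ∑ x ∈ X, Vv F ι L x := by
    intro X hX u
    have h : lift F ι u = ∑ p : Fin m × Fin n, u p • E F ι (Sum.inl p) := rfl
    rw [h]
    exact Submodule.sum_mem _ fun p _ =>
      Submodule.smul_mem _ _ (hmemsum X _ (hX p.1) (hVlo p))
  have htop : ∀ X : Finset (Fin (m + 2 * c)),
      (∀ k : Fin m, (⟨k.1, by have := k.isLt; omega⟩ : Fin (m + 2 * c)) ∈ X) →
      (∀ j : Fin c, (⟨m + j.1, by have := j.isLt; omega⟩ : Fin (m + 2 * c)) ∈ X) →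
      ∑ x ∈ X, Vv F ι L x = ⊤ := by
    intro X h1 h2
    rw [eq_top_iff, ← (Pi.basisFun F (Fin (m * n + c))).span_eq, Submodule.span_le]
    rintro v ⟨k0, rfl⟩
    have hv : (Pi.basisFun F (Fin (m * n + c))) k0 = E F ι (ι.symm k0) := by
      simp [E]
    rw [hv]
    rcases h : ι.symm k0 with p | j
    · exact hmemsum X _ (h1 p.1) (hVlo p)
    · exact hmemsum X _ (h2 j) (hVmid j)
  have hrtop : Module.finrank F ↥(⊤ : Submodule F (Fin (m * n + c) → F)) = m * n + c := by
    rw [finrank_top, Module.finrank_pi]; simp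
  refine ⟨fun X => Module.finrank F ↥(∑ i ∈ X, Vv F ι L i), ?_, ?_, ?_, ?_, ?_, ?_, ?_, ?_, ?_, ?_⟩
    <;> beta_reduce
  · -- r ∅ = 0
    rw [Finset.sum_empty]
    exact finrank_bot F _
  · -- monotone
    intro A B hAB
    apply Submodule.finrank_mono
    rw [sum_submodule_eq_sup, sum_submodule_eq_sup]
    exact Finset.sup_mono hAB
  · -- submodular
    intro A B
    have h1 : ∑ x ∈ A ∪ B, Vv F ι L x = (∑ x ∈ A, Vv F ι L x) ⊔ ∑ x ∈ B, Vv F ι L x := by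
      rw [sum_submodule_eq_sup, sum_submodule_eq_sup, sum_submodule_eq_sup, Finset.sup_union]
    have h2 : ∑ x ∈ A ∩ B, Vv F ι L x ≤ (∑ x ∈ A, Vv F ι L x) ⊓ ∑ x ∈ B, Vv F ι L x := by
      simp only [sum_submodule_eq_sup]
      exact le_inf (Finset.sup_mono Finset.inter_subset_left)
        (Finset.sup_mono Finset.inter_subset_right)
    calc Module.finrank F ↥(∑ x ∈ A ∪ B, Vv F ι L x)
          + Module.finrank F ↥(∑ x ∈ A ∩ B, Vv F ι L x)
        ≤ Module.finrank F ↥((∑ x ∈ A, Vv F ι L x) ⊔ ∑ x ∈ B, Vv F ι L x)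
          + Module.finrank F ↥((∑ x ∈ A, Vv F ι L x) ⊓ ∑ x ∈ B, Vv F ι L x) := by
          rw [h1]; exact add_le_add le_rfl (Submodule.finrank_mono h2)
      _ = _ := Submodule.finrank_sup_add_finrank_inf_eq _ _
  · -- representable
    exact ⟨m * n + c, Vv F ι L, fun X => rfl⟩
  · -- rank
    rw [htop Finset.univ (fun _ => Finset.mem_univ _) (fun _ => Finset.mem_univ _)]
    exact hrtop
  · -- (A) first part
    intro i
    rw [Finset.sum_singleton, Vv_lo ι L (show ((⟨i.1, by omega⟩ : Fin (m + 2 * c))).1 < m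
      from i.isLt)]
    have hli : LinearIndependent F
        (fun s : Fin n => E F ι (Sum.inl ((⟨i.1, i.isLt⟩ : Fin m), s))) :=
      (E_li ι).comp _ (fun a b hab => by
        simpa using congrArg (fun q : Idx m n c =>
          Sum.elim (fun pr : Fin m × Fin n => pr.2) (fun _ => a) q) hab)
    rw [finrank_span_eq_card hli]
    simp
  · -- (A) second part
    rw [htop _ (fun k => by
        simp only [Finset.mem_filter, Finset.mem_univ, true_and]; omega)
      (fun j => by
        simp only [Finset.mem_filter, Finset.mem_univ, true_and]; omega)]
    exact hrtop
  · -- (A) third part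
    intro i
    rw [Finset.sum_singleton]
    by_cases h : i.1 < c
    · rw [Vv_mid ι L (j := ⟨i.1, h⟩) rfl]
      exact finrank_span_singleton (E_ne_zero ι _)
    · rw [Vv_hi ι L (j := ⟨i.1 - c, by have := i.isLt; omega⟩)
        (show m + i.1 = m + c + (i.1 - c) by omega)]
      exact finrank_span_singleton (wvec_ne_zero ι L _)
  · -- (B)
    intro i
    have hX0mem : ∀ k : Fin m, (⟨k.1, by have := k.isLt; omega⟩ : Fin (m + 2 * c)) ∈
        Finset.univ.filter (fun x : Fin (m + 2 * c) => x.1 < m) := fun k => by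
      simp only [Finset.mem_filter, Finset.mem_univ, true_and]
      exact k.isLt
    have hVa : Vv F ι L ⟨m + i.1, by have := i.isLt; omega⟩
        = Submodule.span F {E F ι (Sum.inr i)} := Vv_mid ι L rfl
    have hVb : Vv F ι L ⟨m + c + i.1, by have := i.isLt; omega⟩
        = Submodule.span F {wvec F ι L i} := Vv_hi ι L rfl
    set M0 := ∑ x ∈ Finset.univ.filter (fun x : Fin (m + 2 * c) => x.1 < m), Vv F ι L x
      with hM0
    have hwa : wvec F ι L i ∈ M0 ⊔ Submodule.span F {E F ι (Sum.inr i)} := by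
      rw [show wvec F ι L i = lift F ι (fun p => L p i) + E F ι (Sum.inr i) from rfl]
      exact add_mem (Submodule.mem_sup_left (hlift _ hX0mem _))
        (Submodule.mem_sup_right (Submodule.mem_span_singleton_self _))
    have hea : E F ι (Sum.inr i) ∈ M0 ⊔ Submodule.span F {wvec F ι L i} := by
      have h : E F ι (Sum.inr i) = wvec F ι L i - lift F ι (fun p => L p i) := by
        rw [show wvec F ι L i = lift F ι (fun p => L p i) + E F ι (Sum.inr i) from rfl]
        abel
      rw [h]
      exact sub_mem (Submodule.mem_sup_right (Submodule.mem_span_singleton_self _))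
        (Submodule.mem_sup_left (hlift _ hX0mem _))
    have hsum : ∀ Y : Finset (Fin (m + 2 * c)),
        ∑ x ∈ (Finset.univ.filter (fun x : Fin (m + 2 * c) => x.1 < m)) ∪ Y, Vv F ι L x
          = M0 ⊔ Y.sup (Vv F ι L) := by
      intro Y
      rw [sum_submodule_eq_sup, Finset.sup_union, hM0, sum_submodule_eq_sup]
    have key1 : M0 ⊔ (Vv F ι L ⟨m + i.1, by have := i.isLt; omega⟩
          ⊔ Vv F ι L ⟨m + c + i.1, by have := i.isLt; omega⟩)
        = M0 ⊔ Vv F ι L ⟨m + i.1, by have := i.isLt; omega⟩ := by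
      apply le_antisymm
      · refine sup_le le_sup_left (sup_le le_sup_right ?_)
        rw [hVb, hVa, Submodule.span_singleton_le_iff_mem]
        exact hwa
      · exact sup_le le_sup_left (le_trans le_sup_left le_sup_right)
    have key2 : M0 ⊔ Vv F ι L ⟨m + i.1, by have := i.isLt; omega⟩
        = M0 ⊔ Vv F ι L ⟨m + c + i.1, by have := i.isLt; omega⟩ := by
      apply le_antisymm
      · refine sup_le le_sup_left ?_
        rw [hVa, hVb, Submodule.span_singleton_le_iff_mem]
        exact hea
      · refine sup_le le_sup_left ?_
        rw [hVb, hVa, Submodule.span_singleton_le_iff_mem]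
        exact hwa
    constructor
    · rw [hsum, hsum, Finset.sup_insert, Finset.sup_singleton, Finset.sup_singleton, key1]
    · rw [hsum, hsum, Finset.sup_singleton, Finset.sup_singleton, key2]
  · -- (C)
    intro i Fp hFp
    obtain ⟨ψ, hψ⟩ := hL i
    have hz : ∀ z : (Fin m × Fin n) → F, (∀ k ∈ Hs i, ∀ s : Fin n, z (k, s) = 0) →
        (∀ j ∉ Fp, Matrix.vecMul z L j = 0) → ∀ s : Fin n, z (f i, s) = 0 := by
      intro z hzH hzL s
      obtain ⟨F1, hF1sub, hF1card⟩ :=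
        Finset.exists_subset_card_eq (show δ i ≤ Fp.card by rw [hFp]; omega)
      set ε1 : Fin c → F := fun j => if j ∈ F1 then Matrix.vecMul z L j else 0 with hε1
      set ε2 : Fin c → F := fun j => if j ∈ Fp \ F1 then - Matrix.vecMul z L j else 0 with hε2
      have key : Matrix.vecMul z L + ε2 = ε1 := by
        funext j
        rw [hε1, hε2]
        by_cases h1 : j ∈ F1
        · have h2 : j ∉ Fp \ F1 := by simp [h1]
          simp [h1, h2]
        · by_cases h2 : j ∈ Fp
          · have h3 : j ∈ Fp \ F1 := Finset.mem_sdiff.mpr ⟨h2, h1⟩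
            simp [h1, h2, h3]
          · have h3 : j ∉ Fp \ F1 := by simp [h2]
            simp [h1, h3, hzL j h2]
      have hn1 : hammingNorm ε1 ≤ δ i := by
        rw [← hF1card]
        show (Finset.filter (fun j => ε1 j ≠ 0) Finset.univ).card ≤ F1.card
        refine Finset.card_le_card ?_
        intro j hj
        rw [Finset.mem_filter] at hj
        by_contra h
        exact hj.2 (by rw [hε1]; simp [h])
      have hn2 : hammingNorm ε2 ≤ δ i := by
        have hb : (Finset.filter (fun j => ε2 j ≠ 0) Finset.univ).card ≤ (Fp \ F1).card := by
          refine Finset.card_le_card ?_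
          intro j hj
          rw [Finset.mem_filter] at hj
          by_contra h
          exact hj.2 (by rw [hε2]; simp [h])
        rw [Finset.card_sdiff_of_subset hF1sub, hF1card, hFp] at hb
        calc hammingNorm ε2 = (Finset.filter (fun j => ε2 j ≠ 0) Finset.univ).card := rfl
          _ ≤ 2 * δ i - δ i := hb
          _ ≤ δ i := by omega
      have H1 : ψ (Matrix.vecMul z L + ε2)
          (fun k : {k : Fin m // k ∈ Hs i} => fun s' => z (k.1, s'))
          = fun s' => z (f i, s') := hψ (fun k s' => z (k, s')) ε2 hn2
      have H2 : ψ (Matrix.vecMul (0 : (Fin m × Fin n) → F) L + ε1)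
          (fun _ : {k : Fin m // k ∈ Hs i} => fun _ : Fin n => (0 : F)) = fun _ => (0 : F) :=
        hψ (fun _ _ => (0 : F)) ε1 hn1
      rw [Matrix.zero_vecMul, zero_add] at H2
      have Hside : (fun k : {k : Fin m // k ∈ Hs i} => fun s' => z (k.1, s'))
          = (fun _ => fun _ => (0 : F)) := by
        funext k s'
        exact hzH k.1 k.2 s'
      rw [key, Hside, H2] at H1
      exact congrFun H1.symm s
    have hK : ∀ s : Fin n, Pi.single ((f i, s) : Fin m × Fin n) (1 : F) ∈
        Submodule.span F (((fun p : Fin m × Fin n => Pi.single p (1 : F)) '' {p | p.1 ∈ Hs i}) ∪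
          ((fun j : Fin c => fun p : Fin m × Fin n => L p j) '' {j | j ∉ Fp})) := by
      intro s
      rw [← Subspace.forall_mem_dualAnnihilator_apply_eq_zero_iff]
      intro φ hφ
      rw [Submodule.mem_dualAnnihilator] at hφ
      have hφeq : ∀ y : (Fin m × Fin n) → F, φ y = ∑ p, y p * φ (Pi.single p 1) := by
        intro y
        have hy : y = ∑ p, y p • (Pi.single p (1 : F) : (Fin m × Fin n) → F) := by
          funext q
          simp [Pi.single_apply, Finset.sum_apply, Finset.sum_ite_eq]
        conv_lhs => rw [hy]
        rw [map_sum]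
        simp [smul_eq_mul]
      have hz1 : ∀ k ∈ Hs i, ∀ s' : Fin n, φ (Pi.single ((k, s') : Fin m × Fin n) 1) = 0 :=
        fun k hk s' => hφ _ (Submodule.subset_span (Or.inl ⟨(k, s'), hk, rfl⟩))
      have hz2 : ∀ j ∉ Fp, Matrix.vecMul (fun p : Fin m × Fin n => φ (Pi.single p 1)) L j = 0 := by
        intro j hj
        calc Matrix.vecMul (fun p : Fin m × Fin n => φ (Pi.single p 1)) L j
            = ∑ p, φ (Pi.single p 1) * L p j := by
              simp [Matrix.vecMul, dotProduct]
          _ = ∑ p, L p j * φ (Pi.single p 1) := Finset.sum_congr rfl fun p _ => mul_comm _ _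
          _ = φ (fun p => L p j) := (hφeq _).symm
          _ = 0 := hφ _ (Submodule.subset_span (Or.inr ⟨j, hj, rfl⟩))
      exact hz (fun p => φ (Pi.single p 1)) hz1 hz2 s
    have hmap : Submodule.span F
          (((fun p : Fin m × Fin n => Pi.single p (1 : F)) '' {p | p.1 ∈ Hs i}) ∪
            ((fun j : Fin c => fun p : Fin m × Fin n => L p j) '' {j | j ∉ Fp})) ≤
        Submodule.comap (lift F ι)
          (∑ x ∈ (Finset.univ.filter (fun x : Fin (m + 2 * c) => m + c ≤ x.1)) ∪
            ((Hs i).image (fun k : Fin m => (⟨k.1, by omega⟩ : Fin (m + 2 * c))) ∪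
              Fpᶜ.image (fun j : Fin c => (⟨m + j.1, by omega⟩ : Fin (m + 2 * c)))),
            Vv F ι L x) := by
      rw [Submodule.span_le]
      rintro v (⟨p, hp, rfl⟩ | ⟨j, hj, rfl⟩)
      · simp only [SetLike.mem_coe, Submodule.mem_comap]
        rw [lift_single]
        refine hmemsum _ _ ?_ (hVlo p)
        refine Finset.mem_union_right _ (Finset.mem_union_left _ ?_)
        exact Finset.mem_image.mpr ⟨p.1, hp, rfl⟩
      · simp only [SetLike.mem_coe, Submodule.mem_comap]
        have hw : lift F ι (fun p => L p j) = wvec F ι L j - E F ι (Sum.inr j) := by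
          rw [show wvec F ι L j = lift F ι (fun p => L p j) + E F ι (Sum.inr j) from rfl]
          abel
        rw [hw]
        refine sub_mem (hmemsum _ _ ?_ (hVhi j)) (hmemsum _ _ ?_ (hVmid j))
        · refine Finset.mem_union_left _ ?_
          simp only [Finset.mem_filter, Finset.mem_univ, true_and]
          omega
        · refine Finset.mem_union_right _ (Finset.mem_union_right _ ?_)
          exact Finset.mem_image.mpr ⟨j, Finset.mem_compl.mpr hj, rfl⟩
    have hW : Vv F ι L ⟨(f i).1, by have := (f i).isLt; omega⟩ ≤
        ∑ x ∈ (Finset.univ.filter (fun x : Fin (m + 2 * c) => m + c ≤ x.1)) ∪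
          ((Hs i).image (fun k : Fin m => (⟨k.1, by omega⟩ : Fin (m + 2 * c))) ∪
            Fpᶜ.image (fun j : Fin c => (⟨m + j.1, by omega⟩ : Fin (m + 2 * c)))),
          Vv F ι L x := by
      rw [Vv_lo ι L (show ((⟨(f i).1, by have := (f i).isLt; omega⟩ : Fin (m + 2 * c))).1 < m
        from (f i).isLt)]
      rw [Submodule.span_le]
      rintro v ⟨s, rfl⟩
      have h2 := hmap (hK s)
      rw [Submodule.mem_comap, lift_single] at h2
      exact h2
    rw [sum_submodule_eq_sup, Finset.sup_insert, ← sum_submodule_eq_sup,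
      sup_eq_right.mpr hW]
end

section
/- Define r : 2^{{1,2,3,4}} → Z_{≥0} by r(∅)=0; r({1})=r({2})=r({3})=r({4})=2; r({1,2})=r({1,3})=r({1,4})=r({2,3})=r({2,4})=3; and r({3,4})=r({1,2,3})=r({1,2,4})=r({1,3,4})=r({2,3,4})=r({1,2,3,4})=4. Then for every field F there do not exist subspaces V_1, V_2, V_3, V_4 of a finite-dimensional F-vector space such that dim(∑_{i∈X} V_i) = r(X) for all X ⊆ {1,2,3,4}; that is, the discrete polymatroid with rank function r is not representable over any field. -/
/-- Example 4 of the paper: the discrete polymatroid on ground set `{1,2,3,4}`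
with the given rank function (which violates the Ingleton inequality) is not
representable over any field. -/
theorem stmt12 (r : Finset (Fin 4) → ℕ)
    (h0 : r ∅ = 0)
    (hs1 : r {0} = 2) (hs2 : r {1} = 2) (hs3 : r {2} = 2) (hs4 : r {3} = 2)
    (h12 : r {0, 1} = 3) (h13 : r {0, 2} = 3) (h14 : r {0, 3} = 3)
    (h23 : r {1, 2} = 3) (h24 : r {1, 3} = 3)
    (h34 : r {2, 3} = 4)
    (h123 : r {0, 1, 2} = 4) (h124 : r {0, 1, 3} = 4)
    (h134 : r {0, 2, 3} = 4) (h234 : r {1, 2, 3} = 4)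
    (hall : r {0, 1, 2, 3} = 4)
    (F W : Type) [Field F] [AddCommGroup W] [Module F W] [FiniteDimensional F W]
    (V : Fin 4 → Submodule F W) :
    ¬ (∀ X : Finset (Fin 4), Module.finrank F ↥(∑ i ∈ X, V i) = r X) := by
  intro h
  set A := V 0; set B := V 1; set C := V 2; set D := V 3
  set d := fun s : Submodule F W => Module.finrank F ↥s with hd
  -- extract dimension values
  have pair : ∀ (i j : Fin 4), i ≠ j → (∑ k ∈ ({i, j} : Finset (Fin 4)), V k) = V i ⊔ V j := by
    intro i j hij
    rw [Finset.sum_pair hij, Submodule.add_eq_sup]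
  have triple : ∀ (i j k : Fin 4), i ≠ j → i ≠ k → j ≠ k →
      (∑ l ∈ ({i, j, k} : Finset (Fin 4)), V l) = V i ⊔ V j ⊔ V k := by
    intro i j k hij hik hjk
    rw [Finset.sum_insert (by simp [hij, hik]), pair j k hjk, Submodule.add_eq_sup, sup_assoc]
  have dA : d A = 2 := by
    have := h {0}; rwa [Finset.sum_singleton, hs1] at this
  have dB : d B = 2 := by
    have := h {1}; rwa [Finset.sum_singleton, hs2] at this
  have dAB : d (A ⊔ B) = 3 := by
    have := h {0, 1}
    rwa [pair 0 1 (by decide), h12] at this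
  have dAC : d (A ⊔ C) = 3 := by
    have := h {0, 2}
    rwa [pair 0 2 (by decide), h13] at this
  have dBC : d (B ⊔ C) = 3 := by
    have := h {1, 2}
    rwa [pair 1 2 (by decide), h23] at this
  have dAD : d (A ⊔ D) = 3 := by
    have := h {0, 3}
    rwa [pair 0 3 (by decide), h14] at this
  have dBD : d (B ⊔ D) = 3 := by
    have := h {1, 3}
    rwa [pair 1 3 (by decide), h24] at this
  have dCD : d (C ⊔ D) = 4 := by
    have := h {2, 3}
    rwa [pair 2 3 (by decide), h34] at this
  have dABC : d (A ⊔ B ⊔ C) = 4 := by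
    have := h {0, 1, 2}
    rwa [triple 0 1 2 (by decide) (by decide) (by decide), h123] at this
  have dABD : d (A ⊔ B ⊔ D) = 4 := by
    have := h {0, 1, 3}
    rwa [triple 0 1 3 (by decide) (by decide) (by decide), h124] at this
  -- modular law for dimensions
  have mod : ∀ s t : Submodule F W, d (s ⊔ t) + d (s ⊓ t) = d s + d t := fun s t =>
    Submodule.finrank_sup_add_finrank_inf_eq s t
  have mono : ∀ s t : Submodule F W, s ≤ t → d s ≤ d t := fun s t hst =>
    Submodule.finrank_mono hst
  -- Ingleton-style argument
  have e1 : d (A ⊔ B) + d (A ⊓ B) = d A + d B := mod A B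
  set X := (A ⊓ B) ⊔ C with hX
  set Y := (A ⊓ B) ⊔ D with hY
  have hXY : X ⊔ Y = (A ⊓ B) ⊔ (C ⊔ D) := by
    rw [hX, hY]
    rw [sup_sup_sup_comm, sup_idem]
  have e2 : d (X ⊔ Y) + d (X ⊓ Y) = d X + d Y := mod X Y
  have le1 : d (A ⊓ B) ≤ d (X ⊓ Y) :=
    mono _ _ (le_inf le_sup_left le_sup_left)
  have le2 : d (C ⊔ D) ≤ d (X ⊔ Y) := by
    rw [hXY]; exact mono _ _ le_sup_right
  have hXle : X ≤ (A ⊔ C) ⊓ (B ⊔ C) :=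
    sup_le (le_inf (inf_le_left.trans le_sup_left) (inf_le_right.trans le_sup_left))
      (le_inf le_sup_right le_sup_right)
  have hYle : Y ≤ (A ⊔ D) ⊓ (B ⊔ D) :=
    sup_le (le_inf (inf_le_left.trans le_sup_left) (inf_le_right.trans le_sup_left))
      (le_inf le_sup_right le_sup_right)
  have e3 : d ((A ⊔ C) ⊔ (B ⊔ C)) + d ((A ⊔ C) ⊓ (B ⊔ C)) = d (A ⊔ C) + d (B ⊔ C) :=
    mod _ _
  have e4 : d ((A ⊔ D) ⊔ (B ⊔ D)) + d ((A ⊔ D) ⊓ (B ⊔ D)) = d (A ⊔ D) + d (B ⊔ D) :=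
    mod _ _
  have hsupC : (A ⊔ C) ⊔ (B ⊔ C) = A ⊔ B ⊔ C := by
    rw [sup_sup_sup_comm, sup_idem]
  have hsupD : (A ⊔ D) ⊔ (B ⊔ D) = A ⊔ B ⊔ D := by
    rw [sup_sup_sup_comm, sup_idem]
  rw [hsupC, dABC, dAC, dBC] at e3
  rw [hsupD, dABD, dAD, dBD] at e4
  have leX : d X ≤ d ((A ⊔ C) ⊓ (B ⊔ C)) := mono _ _ hXle
  have leY : d Y ≤ d ((A ⊔ D) ⊓ (B ⊔ D)) := mono _ _ hYle
  rw [dA, dB, dAB] at e1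
  rw [dCD] at le2
  omega
end
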